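/- For n ≥ 2 let 𝓕̃_{n+1}(q) = q^{n−1}·𝓕_{n+1}(1/q) be the reversal of 𝓕_{n+1}, and regard g_n = 𝓕̃_{n+1}·(𝓕_n)^{-1} as an element of the formal power series ring ℚ⟦q⟧ (the constant coefficient of 𝓕_n is 1, so 𝓕_n is invertible there). Then for every k ≥ 0 the coefficient of q^k in g_n is eventually constant in n, and its eventual value equals the coefficient κ_k of the unique power series f over ℝ with q·f² = (q² + q − 1)·f + 1. -/

import Mathlib

open Polynomial

noncomputable def fibPoly : ℕ → Polynomial ℤ
  | 0 => 0
  | 1 => 1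
  | (n + 2) =>
    if n % 2 = 0 then fibPoly (n + 1) + X ^ 2 * fibPoly n
    else X * fibPoly (n + 1) + fibPoly n

/-- `g_n = 𝓕̃_{n+1}·(𝓕_n)⁻¹` viewed in `ℚ⟦q⟧`, where `𝓕̃_{n+1}(q) = q^{n−1}·𝓕_{n+1}(1/q)`. -/
noncomputable def fibRatio (n : ℕ) : PowerSeries ℚ :=
  (((reflect (n - 1) (fibPoly (n + 1))).map (Int.castRingHom ℚ) : Polynomial ℚ) :
      PowerSeries ℚ) *
    (((fibPoly n).map (Int.castRingHom ℚ) : Polynomial ℚ) : PowerSeries ℚ)⁻¹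

/-! ### Auxiliary definitions and lemmas -/

/-- The reversed Fibonacci polynomials: `mirrorFib n` is the reversal of `fibPoly (n+1)`. -/
noncomputable def mirrorFib : ℕ → Polynomial ℤ
  | 0 => 1
  | 1 => 1
  | 2 => X + 1
  | (n + 3) =>
    if n % 2 = 0 then X * mirrorFib (n + 2) + mirrorFib (n + 1)
    else mirrorFib (n + 2) + X ^ 2 * mirrorFib (n + 1)

lemma mirrorFib_odd (m : ℕ) :
    mirrorFib (2*m+3) = X * mirrorFib (2*m+2) + mirrorFib (2*m+1) := by
  rw [mirrorFib]; simp [Nat.mul_mod_right]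

lemma mirrorFib_even (m : ℕ) :
    mirrorFib (2*m+4) = mirrorFib (2*m+3) + X^2 * mirrorFib (2*m+2) := by
  have h : (2*m+1) % 2 = 1 := by omega
  rw [show 2*m+4 = (2*m+1)+3 by ring, mirrorFib]
  simp [h, show 2*m+1+2 = 2*m+3 by ring, show 2*m+1+1 = 2*m+2 by ring]

lemma fibPoly_odd (m : ℕ) :
    fibPoly (2*m+3) = X * fibPoly (2*m+2) + fibPoly (2*m+1) := by
  have h : (2*m+1) % 2 = 1 := by omega
  rw [show 2*m+3 = (2*m+1)+2 by ring, fibPoly]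
  simp [h, show 2*m+1+1 = 2*m+2 by ring]

lemma fibPoly_even (m : ℕ) :
    fibPoly (2*m+4) = fibPoly (2*m+3) + X^2 * fibPoly (2*m+2) := by
  rw [show 2*m+4 = (2*m+2)+2 by ring, fibPoly]
  simp [show (2*m+2)%2 = 0 by omega, show 2*m+2+1 = 2*m+3 by ring]

/-- The key quadratic identity satisfied by the Fibonacci polynomials and their
reversals, together with the "polarized" versions needed for the induction. -/
lemma keyIdentity (m : ℕ) :
    (X * mirrorFib (2*m+1)^2 = (X^2+X-1) * mirrorFib (2*m+1) * fibPoly (2*m+1)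
        + fibPoly (2*m+1)^2 - X^(2*m+2)) ∧
    (X * mirrorFib (2*m+2)^2 = (X^2+X-1) * mirrorFib (2*m+2) * fibPoly (2*m+2)
        + fibPoly (2*m+2)^2 + X^(2*m+1)) ∧
    (2*X * mirrorFib (2*m+2) * mirrorFib (2*m+1)
        = (X^2+X-1) * (mirrorFib (2*m+2) * fibPoly (2*m+1)
            + mirrorFib (2*m+1) * fibPoly (2*m+2))
          + 2 * fibPoly (2*m+2) * fibPoly (2*m+1) - X^(2*m+1) * (X^2+X-1)) ∧
    (2*X * mirrorFib (2*m+3) * mirrorFib (2*m+2)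
        = (X^2+X-1) * (mirrorFib (2*m+3) * fibPoly (2*m+2)
            + mirrorFib (2*m+2) * fibPoly (2*m+3))
          + 2 * fibPoly (2*m+3) * fibPoly (2*m+2) - X^(2*m+1) * (X^2-X-1)) := by
  induction m with
  | zero =>
      have h0 : fibPoly 0 = 0 := by rw [fibPoly]
      have f1 : fibPoly 1 = 1 := by rw [fibPoly]
      have f2 : fibPoly 2 = 1 := by rw [fibPoly]; simp [f1, h0]
      have f3 : fibPoly 3 = X + 1 := by rw [fibPoly]; simp [f2, f1]
      have m1 : mirrorFib 1 = 1 := by rw [mirrorFib]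
      have m2 : mirrorFib 2 = X + 1 := by rw [mirrorFib]
      have m3 : mirrorFib 3 = X * (X + 1) + 1 := by rw [mirrorFib]; simp [m2, m1]
      refine ⟨?_, ?_, ?_, ?_⟩ <;>
      · simp only [show 2*0+1=1 by norm_num, show 2*0+2=2 by norm_num,
          show 2*0+3=3 by norm_num, m1, m2, m3, f1, f2, f3]
        ring
  | succ m ih =>
      obtain ⟨K1, K2, K3, K4⟩ := ih
      rw [mirrorFib_odd m, fibPoly_odd m] at K4
      rw [show 2*(m+1)+1 = 2*m+3 by ring, show 2*(m+1)+2 = 2*m+4 by ring,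
        show 2*(m+1)+3 = 2*m+5 by ring]
      have hM5 : mirrorFib (2*m+5) = X * mirrorFib (2*m+4) + mirrorFib (2*m+3) := by
        have := mirrorFib_odd (m+1)
        rw [show 2*(m+1)+3 = 2*m+5 by ring, show 2*(m+1)+2 = 2*m+4 by ring,
          show 2*(m+1)+1 = 2*m+3 by ring] at this
        exact this
      have hF5 : fibPoly (2*m+5) = X * fibPoly (2*m+4) + fibPoly (2*m+3) := by
        have := fibPoly_odd (m+1)
        rw [show 2*(m+1)+3 = 2*m+5 by ring, show 2*(m+1)+2 = 2*m+4 by ring,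
          show 2*(m+1)+1 = 2*m+3 by ring] at this
        exact this
      refine ⟨?_, ?_, ?_, ?_⟩
      · rw [mirrorFib_odd m, fibPoly_odd m]
        linear_combination (X:Polynomial ℤ)^2 * K2 + K1 + X * K3
      · rw [mirrorFib_even m, mirrorFib_odd m, fibPoly_even m, fibPoly_odd m]
        linear_combination ((X:Polynomial ℤ)^2 + X^4) * K2 + K1 + X * K3 + X^2 * K4
      · rw [mirrorFib_even m, mirrorFib_odd m, fibPoly_even m, fibPoly_odd m]
        linear_combination 2*(X:Polynomial ℤ)^2 * K2 + 2*K1 + 2*X*K3 + X^2 * K4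
      · rw [hM5, hF5, mirrorFib_even m, mirrorFib_odd m, fibPoly_even m, fibPoly_odd m]
        linear_combination (2*(X:Polynomial ℤ)^3 + 2*X^5 + 2*X^2) * K2 + (2*X+2) * K1
          + (2*X^2+2*X) * K3 + (2*X^3+X^2) * K4

lemma reflect_succ_of_natDegree_le {N : ℕ} {p : Polynomial ℤ} (hp : p.natDegree ≤ N) :
    reflect (N + 1) p = X * reflect N p := by
  ext i
  rcases i with _ | j
  · rw [coeff_reflect, mul_coeff_zero, coeff_X_zero, zero_mul, revAt_le (by omega)]
    exact coeff_eq_zero_of_natDegree_lt (by omega)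
  · rw [coeff_reflect, coeff_X_mul, coeff_reflect]
    by_cases h : j ≤ N
    · rw [revAt_le (by omega), revAt_le h]
      congr 1
      omega
    · rw [revAt_eq_self_of_lt (by omega), revAt_eq_self_of_lt (by omega)]
      rw [coeff_eq_zero_of_natDegree_lt (by omega),
        coeff_eq_zero_of_natDegree_lt (by omega)]

lemma reflect_X_sq_mul {N : ℕ} {p : Polynomial ℤ} (hp : p.natDegree ≤ N) :
    reflect (N + 2) (X ^ 2 * p) = reflect N p := by
  rw [show N + 2 = 2 + N from by omega,
    reflect_mul _ _ (by simpa using (natDegree_X_pow 2 (R := ℤ)).le) hp]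
  rw [show (X ^ 2 : Polynomial ℤ) = C 1 * X ^ 2 from by simp, reflect_C_mul_X_pow]
  simp

lemma reflect_X_mul {N : ℕ} {p : Polynomial ℤ} (hp : p.natDegree ≤ N) :
    reflect (N + 1) (X * p) = reflect N p := by
  rw [show N + 1 = 1 + N from by omega,
    reflect_mul _ _ (natDegree_X_le) hp]
  rw [show (X : Polynomial ℤ) = C 1 * X ^ 1 from by simp, reflect_C_mul_X_pow]
  simp

lemma fibPoly_natDegree_le : ∀ n : ℕ, (fibPoly (n+2)).natDegree ≤ n ∧
    (fibPoly (n+3)).natDegree ≤ n + 1 := by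
  intro n
  induction n with
  | zero =>
      have f2 : fibPoly 2 = 1 := by
        rw [fibPoly]; simp [show fibPoly 1 = 1 from by rw [fibPoly],
          show fibPoly 0 = 0 from by rw [fibPoly]]
      have f3 : fibPoly 3 = X + 1 := by
        rw [fibPoly]; simp [f2, show fibPoly 1 = 1 from by rw [fibPoly]]
      constructor
      · simp [f2]
      · simp only [f3, Nat.zero_add]
        refine le_trans (natDegree_add_le _ _) ?_
        simp
  | succ n ih =>
      obtain ⟨h1, h2⟩ := ih
      refine ⟨h2, ?_⟩
      rw [show n+1+3 = (n+2)+2 from by omega, fibPoly]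
      by_cases hp : (n+2) % 2 = 0
      · rw [if_pos hp]
        refine le_trans (natDegree_add_le _ _) ?_
        refine max_le ?_ ?_
        · simpa only [show n+2+1 = n+3 from by omega] using le_trans h2 (by omega)
        · refine le_trans (natDegree_mul_le) ?_
          have hx : (X ^ 2 : Polynomial ℤ).natDegree = 2 := natDegree_X_pow 2
          omega
      · rw [if_neg hp]
        refine le_trans (natDegree_add_le _ _) ?_
        refine max_le ?_ (le_trans h1 (by omega))
        refine le_trans (natDegree_mul_le) ?_
        have hx : (X : Polynomial ℤ).natDegree = 1 := natDegree_X
        simp only [show n+2+1 = n+3 from by omega]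
        omega

lemma reflect_fibPoly : ∀ m : ℕ, reflect m (fibPoly (m+2)) = mirrorFib (m+1) ∧
    reflect (m+1) (fibPoly (m+3)) = mirrorFib (m+2) := by
  intro m
  induction m with
  | zero =>
      have f2 : fibPoly 2 = 1 := by
        rw [fibPoly]; simp [show fibPoly 1 = 1 from by rw [fibPoly],
          show fibPoly 0 = 0 from by rw [fibPoly]]
      have f3 : fibPoly 3 = X + 1 := by
        rw [fibPoly]; simp [f2, show fibPoly 1 = 1 from by rw [fibPoly]]
      constructor
      · simp only [Nat.zero_add, f2]
        rw [show mirrorFib 1 = 1 from by rw [mirrorFib]]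
        ext i
        rcases i with _ | j <;> simp [coeff_reflect, revAt, coeff_one]
      · simp only [Nat.zero_add, f3]
        rw [show mirrorFib 2 = X + 1 from by rw [mirrorFib]]
        ext i
        simp only [coeff_reflect]
        rcases i with _ | _ | j <;> simp [revAt_le, revAt_eq_self_of_lt, coeff_one, coeff_X]
  | succ m ih =>
      obtain ⟨h1, h2⟩ := ih
      refine ⟨h2, ?_⟩
      have hd2 : (fibPoly (m+2)).natDegree ≤ m := (fibPoly_natDegree_le m).1
      have hd3 : (fibPoly (m+3)).natDegree ≤ m + 1 := (fibPoly_natDegree_le m).2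
      rw [show m+1+3 = (m+2)+2 from by omega, fibPoly]
      by_cases hp : (m+2) % 2 = 0
      · rw [if_pos hp, reflect_add]
        simp only [show m+2+1 = m+3 from by omega, show m+1+1 = m+2 from by omega,
          show m+1+2 = m+3 from by omega]
        have e1 : reflect (m+2) (fibPoly (m+3)) = X * mirrorFib (m+2) := by
          rw [show m+2 = (m+1)+1 from by omega] at *
          rw [reflect_succ_of_natDegree_le hd3, h2]
        have e2 : reflect (m+2) (X^2 * fibPoly (m+2)) = mirrorFib (m+1) := by
          rw [reflect_X_sq_mul hd2, h1]
        rw [e1, e2]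
        rw [mirrorFib, if_pos (show m % 2 = 0 by omega)]
      · rw [if_neg hp, reflect_add]
        simp only [show m+2+1 = m+3 from by omega, show m+1+1 = m+2 from by omega,
          show m+1+2 = m+3 from by omega]
        have e1 : reflect (m+2) (X * fibPoly (m+3)) = mirrorFib (m+2) := by
          rw [show m+2 = (m+1)+1 from by omega]
          rw [reflect_X_mul hd3, h2]
        have e2 : reflect (m+2) (fibPoly (m+2)) = X^2 * mirrorFib (m+1) := by
          rw [show m+2 = (m+1)+1 from by omega] at *
          rw [reflect_succ_of_natDegree_le (le_trans hd2 (by omega))]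
          rw [reflect_succ_of_natDegree_le hd2, h1]
          ring
        rw [e1, e2]
        rw [mirrorFib, if_neg (show ¬ m % 2 = 0 by omega)]

lemma fibPoly_coeff_zero : ∀ n : ℕ, (fibPoly (n+1)).coeff 0 = 1 ∧
    (fibPoly (n+2)).coeff 0 = 1 := by
  intro n
  induction n with
  | zero =>
      have f1 : fibPoly 1 = 1 := by rw [fibPoly]
      have f2 : fibPoly 2 = 1 := by
        rw [fibPoly]; simp [f1, show fibPoly 0 = 0 from by rw [fibPoly]]
      simp [f1, f2]
  | succ n ih =>
      obtain ⟨h1, h2⟩ := ih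
      refine ⟨h2, ?_⟩
      rw [show n+1+2 = (n+1)+2 from rfl, fibPoly]
      by_cases hp : (n+1) % 2 = 0
      · rw [if_pos hp]
        simp only [coeff_add, mul_coeff_zero, coeff_X_pow]
        simpa [show n+1+1 = n+2 from by omega] using h2
      · rw [if_neg hp]
        simp only [coeff_add, mul_coeff_zero, coeff_X_zero, zero_mul, zero_add]
        exact h1

lemma fibPoly_c0 (N : ℕ) (hN : 1 ≤ N) : (fibPoly N).coeff 0 = 1 := by
  obtain ⟨n, rfl⟩ : ∃ n, N = n + 1 := ⟨N - 1, by omega⟩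
  exact (fibPoly_coeff_zero n).1

lemma main_aux (k N : ℕ) (e : Polynomial ℤ)
    (heq : X * mirrorFib N ^ 2 = (X^2+X-1) * mirrorFib N * fibPoly N + fibPoly N ^ 2 + e)
    (he : ∀ j, j ≤ k → e.coeff j = 0) (hN : 1 ≤ N)
    (f : PowerSeries ℝ)
    (hf : PowerSeries.X * f ^ 2 = (PowerSeries.X ^ 2 + PowerSeries.X - 1) * f + 1) :
    ((PowerSeries.coeff k
        ((((mirrorFib N).map (Int.castRingHom ℚ) : Polynomial ℚ) : PowerSeries ℚ) *
          (((fibPoly N).map (Int.castRingHom ℚ) : Polynomial ℚ) : PowerSeries ℚ)⁻¹) : ℚ) : ℝ)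
      = PowerSeries.coeff k f := by
  set A : PowerSeries ℚ :=
    (((mirrorFib N).map (Int.castRingHom ℚ) : Polynomial ℚ) : PowerSeries ℚ) with hAdef
  set F : PowerSeries ℚ :=
    (((fibPoly N).map (Int.castRingHom ℚ) : Polynomial ℚ) : PowerSeries ℚ) with hFdef
  set E : PowerSeries ℚ :=
    ((e.map (Int.castRingHom ℚ) : Polynomial ℚ) : PowerSeries ℚ) with hEdef
  -- power series identity over ℚ
  have hps : PowerSeries.X * A ^ 2 =
      (PowerSeries.X ^ 2 + PowerSeries.X - 1) * A * F + F ^ 2 + E := by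
    have := congrArg
      (fun p : Polynomial ℤ => ((p.map (Int.castRingHom ℚ) : Polynomial ℚ) : PowerSeries ℚ))
      heq
    simpa only [Polynomial.map_add, Polynomial.map_mul, Polynomial.map_pow,
      Polynomial.map_sub, Polynomial.map_one, Polynomial.map_X, Polynomial.coe_add,
      Polynomial.coe_mul, Polynomial.coe_pow, Polynomial.coe_sub, Polynomial.coe_one,
      Polynomial.coe_X, hAdef, hFdef, hEdef] using this
  -- F is invertible
  have hc : PowerSeries.constantCoeff F ≠ 0 := by
    have : PowerSeries.constantCoeff F = 1 := by
      rw [← PowerSeries.coeff_zero_eq_constantCoeff_apply, hFdef, Polynomial.coeff_coe,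
        Polynomial.coeff_map, fibPoly_c0 N hN]
      simp
    rw [this]; exact one_ne_zero
  have hFi : F * F⁻¹ = 1 := PowerSeries.mul_inv_cancel _ hc
  -- functional equation with error term, for the ratio over ℚ
  have hg : PowerSeries.X * (A * F⁻¹) ^ 2 =
      (PowerSeries.X ^ 2 + PowerSeries.X - 1) * (A * F⁻¹) + 1 + E * (F⁻¹) ^ 2 := by
    linear_combination ((PowerSeries.X ^ 2 + PowerSeries.X - 1) * A * F⁻¹ + F * F⁻¹ + 1) * hFi
      + (F⁻¹) ^ 2 * hps
  -- move to ℝ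
  set σ : ℚ →+* ℝ := Rat.castHom ℝ with hσ
  have hR := congrArg (PowerSeries.map σ) hg
  simp only [map_mul, map_add, map_pow, map_sub, map_one, PowerSeries.map_X] at hR
  set G : PowerSeries ℝ := PowerSeries.map σ A * PowerSeries.map σ F⁻¹ with hGdef
  -- the error term is divisible by X^(k+1)
  have hdvd : (PowerSeries.X : PowerSeries ℝ) ^ (k+1) ∣
      PowerSeries.map σ E * (PowerSeries.map σ F⁻¹) ^ 2 := by
    refine Dvd.dvd.mul_right ?_ _
    rw [PowerSeries.X_pow_dvd_iff]
    intro j hj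
    rw [PowerSeries.coeff_map, hEdef, Polynomial.coeff_coe, Polynomial.coeff_map,
      he j (by omega)]
    simp
  obtain ⟨H, hH⟩ := hdvd
  rw [hH] at hR
  -- uniqueness argument
  set u : PowerSeries ℝ := PowerSeries.X * (G + f) -
    (PowerSeries.X ^ 2 + PowerSeries.X - 1) with hudef
  have hcu : PowerSeries.constantCoeff u ≠ 0 := by
    have : PowerSeries.constantCoeff u = 1 := by
      rw [hudef]
      simp
    rw [this]; exact one_ne_zero
  have hmu : u * u⁻¹ = 1 := PowerSeries.mul_inv_cancel _ hcu
  have hu : (G - f) * u = PowerSeries.X ^ (k+1) * H := by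
    rw [hudef]
    linear_combination hR - hf
  have hD : G - f = PowerSeries.X ^ (k+1) * (H * u⁻¹) := by
    linear_combination u⁻¹ * hu - (G - f) * hmu
  have hcoeff : PowerSeries.coeff k (G - f) = 0 := by
    rw [hD]
    exact PowerSeries.X_pow_dvd_iff.mp ⟨H * u⁻¹, rfl⟩ k (lt_add_one k)
  have hGf : PowerSeries.coeff k G = PowerSeries.coeff k f := by
    have := hcoeff
    rw [map_sub, sub_eq_zero] at this
    exact this
  rw [← hGf, hGdef, ← map_mul, PowerSeries.coeff_map]
  simp [hσ]

theorem fibRatio_coeff_stabilizes_to_qGoldenRatio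
    (f : PowerSeries ℝ)
    (hf : PowerSeries.X * f ^ 2 = (PowerSeries.X ^ 2 + PowerSeries.X - 1) * f + 1) :
    ∀ k : ℕ, ∃ N : ℕ, 2 ≤ N ∧ ∀ n : ℕ, N ≤ n →
      ((PowerSeries.coeff k (fibRatio n) : ℚ) : ℝ) = PowerSeries.coeff k f := by
  intro k
  refine ⟨k + 2, by omega, ?_⟩
  intro n hn
  obtain ⟨n', rfl⟩ : ∃ n', n = n' + 1 := ⟨n - 1, by omega⟩
  have hrefl : reflect (n'+1-1) (fibPoly (n'+1+1)) = mirrorFib (n'+1) := by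
    simpa only [show n'+1-1 = n' from by omega, show n'+1+1 = n'+2 from by omega]
      using (reflect_fibPoly n').1
  have hfr : fibRatio (n'+1) =
      (((mirrorFib (n'+1)).map (Int.castRingHom ℚ) : Polynomial ℚ) : PowerSeries ℚ) *
        (((fibPoly (n'+1)).map (Int.castRingHom ℚ) : Polynomial ℚ) : PowerSeries ℚ)⁻¹ := by
    rw [fibRatio, hrefl]
  rw [hfr]
  obtain ⟨m, hm | hm⟩ := Nat.even_or_odd' n'
  · subst hm
    refine main_aux k (2*m+1) (-X^(2*m+2)) ?_ ?_ (by omega) f hf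
    · linear_combination (keyIdentity m).1
    · intro j hj
      have hk : k + 2 ≤ 2*m + 1 := hn
      rw [coeff_neg, coeff_X_pow, if_neg (by omega)]
      simp
  · subst hm
    have hk : k + 2 ≤ 2*m + 1 + 1 := hn
    refine main_aux k (2*m+1+1) (X^(2*m+1)) ?_ ?_ (by omega) f hf
    · have := (keyIdentity m).2.1
      simpa only [show 2*m+2 = 2*m+1+1 from by omega] using this
    · intro j hj
      rw [coeff_X_pow, if_neg (by omega)]
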